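/- Let d ≥ 2, let p be a prime, and let G be a closed fractal subgroup of Aut T_d. If H is an open normal subgroup of G that is pro-p, then the self-similar closure of H in G is an open, normal, pro-p subgroup of G. -/

import Mathlib

open scoped Pointwise

namespace TreeDyn

/-- Vertices of the `d`-regular rooted tree: finite words over `{0,…,d-1}`,
with the empty word as root and children of `w` the words `w ++ [x]`. -/
abbrev Vertex (d : ℕ) := List (Fin d)

/-- A function on words is length-preserving and prefix-preserving. -/
def LP (d : ℕ) (f : Vertex d → Vertex d) : Prop :=
  (∀ w : Vertex d, (f w).length = w.length) ∧
    ∀ v w : Vertex d, v <+: w → f v <+: f w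

theorem LP.id' (d : ℕ) : LP d id := ⟨fun _ => rfl, fun _ _ h => h⟩

theorem LP.comp {d : ℕ} {f g : Vertex d → Vertex d} (hf : LP d f) (hg : LP d g) :
    LP d (f ∘ g) :=
  ⟨fun w => (hf.1 (g w)).trans (hg.1 w), fun v w h => hf.2 _ _ (hg.2 _ _ h)⟩

/-- The automorphism group of the rooted `d`-regular tree, realized as the subgroup of
permutations of the vertex set which fix the root and preserve the child relation
(equivalently: length- and prefix-preserving permutations). -/
def treeAut (d : ℕ) : Subgroup (Equiv.Perm (Vertex d)) where
  carrier := {g | LP d ⇑g ∧ LP d ⇑g⁻¹}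
  one_mem' := ⟨LP.id' d, by simpa using LP.id' d⟩
  mul_mem' := by
    rintro a b ⟨ha1, ha2⟩ ⟨hb1, hb2⟩
    refine ⟨?_, ?_⟩
    · simpa [Equiv.Perm.coe_mul] using ha1.comp hb1
    · rw [mul_inv_rev]
      simpa [Equiv.Perm.coe_mul] using hb2.comp ha2
  inv_mem' := by
    rintro a ⟨h1, h2⟩
    exact ⟨h2, by simpa using h1⟩

/-- `Aut T_d`, the automorphism group of the `d`-regular rooted tree. -/
abbrev AutT (d : ℕ) := ↥(treeAut d)

namespace AutT

variable {d : ℕ}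

/-- The underlying permutation of the vertices. -/
def toPerm (g : AutT d) : Equiv.Perm (Vertex d) := g.1

theorem toPerm_mul (g h : AutT d) : (g * h).toPerm = g.toPerm * h.toPerm := rfl

theorem toPerm_inv (g : AutT d) : (g⁻¹).toPerm = (g.toPerm)⁻¹ := rfl

theorem toPerm_one : (1 : AutT d).toPerm = 1 := rfl

theorem length_apply (g : AutT d) (w : Vertex d) : (g.toPerm w).length = w.length :=
  g.2.1.1 w

theorem prefix_apply (g : AutT d) {v w : Vertex d} (h : v <+: w) :
    g.toPerm v <+: g.toPerm w :=
  g.2.1.2 v w h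

theorem take_apply (g : AutT d) (v u : Vertex d) :
    (g.toPerm (v ++ u)).take v.length = g.toPerm v := by
  have h : g.toPerm v <+: g.toPerm (v ++ u) := g.prefix_apply (List.prefix_append v u)
  have h2 := List.prefix_iff_eq_take.mp h
  rw [length_apply] at h2
  exact h2.symm

theorem apply_append (g : AutT d) (v u : Vertex d) :
    g.toPerm (v ++ u) = g.toPerm v ++ (g.toPerm (v ++ u)).drop v.length := by
  conv_lhs => rw [← List.take_append_drop v.length (g.toPerm (v ++ u))]
  rw [take_apply]

/-- The section function: the action of `g` on the subtree over `v`, transported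
to the whole tree. -/
def secFun (g : AutT d) (v : Vertex d) : Vertex d → Vertex d :=
  fun u => (g.toPerm (v ++ u)).drop v.length

theorem secFun_spec (g : AutT d) (v u : Vertex d) :
    g.toPerm (v ++ u) = g.toPerm v ++ secFun g v u :=
  apply_append g v u

theorem secFun_left (g : AutT d) (v u : Vertex d) :
    secFun g⁻¹ (g.toPerm v) (secFun g v u) = u := by
  have h1 := secFun_spec g⁻¹ (g.toPerm v) (secFun g v u)
  rw [← secFun_spec g v u] at h1
  rw [toPerm_inv] at h1
  simp only [Equiv.Perm.inv_def, Equiv.symm_apply_apply] at h1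
  exact (List.append_cancel_left h1).symm

theorem LP_secFun (g : AutT d) (v : Vertex d) : LP d (secFun g v) := by
  constructor
  · intro w
    simp only [secFun, List.length_drop, length_apply, List.length_append]
    omega
  · intro u1 u2 h
    have h2 : g.toPerm (v ++ u1) <+: g.toPerm (v ++ u2) := by
      refine g.prefix_apply ?_
      obtain ⟨t, ht⟩ := h
      exact ⟨t, by rw [List.append_assoc, ht]⟩
    exact h2.drop v.length

/-- The section of the tree automorphism `g` at the vertex `v`: the automorphism `g|_v` with
`g (v ++ u) = g v ++ g|_v u`. -/
def sec (g : AutT d) (v : Vertex d) : AutT d :=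
  ⟨{ toFun := secFun g v
     invFun := secFun g⁻¹ (g.toPerm v)
     left_inv := secFun_left g v
     right_inv := by
       intro u
       have h := secFun_left g⁻¹ (g.toPerm v) u
       rw [inv_inv] at h
       rw [toPerm_inv] at h
       simp only [Equiv.Perm.inv_def, Equiv.symm_apply_apply] at h
       exact h },
   by
     refine ⟨LP_secFun g v, ?_⟩
     have : ⇑(({ toFun := secFun g v
                 invFun := secFun g⁻¹ (g.toPerm v)
                 left_inv := secFun_left g v
                 right_inv := by
                   intro u
                   have h := secFun_left g⁻¹ (g.toPerm v) u
                   rw [inv_inv] at h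
                   rw [toPerm_inv] at h
                   simp only [Equiv.Perm.inv_def, Equiv.symm_apply_apply] at h
                   exact h } : Equiv.Perm (Vertex d))⁻¹) = secFun g⁻¹ (g.toPerm v) := rfl
     rw [this]
     exact LP_secFun g⁻¹ (g.toPerm v)⟩

theorem sec_apply (g : AutT d) (v u : Vertex d) :
    (sec g v).toPerm u = (g.toPerm (v ++ u)).drop v.length := rfl

end AutT

open AutT

/-- The stabilizer of the vertex `v` in `Aut T_d`. -/
def stabT (d : ℕ) (v : Vertex d) : Subgroup (AutT d) where
  carrier := {g | g.toPerm v = v}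
  one_mem' := rfl
  mul_mem' := by
    intro a b ha hb
    show (a * b).toPerm v = v
    rw [toPerm_mul, Equiv.Perm.mul_apply]
    rw [show b.toPerm v = v from hb, show a.toPerm v = v from ha]
  inv_mem' := by
    intro a ha
    show (a⁻¹).toPerm v = v
    rw [toPerm_inv]
    rw [Equiv.Perm.inv_eq_iff_eq]
    exact (show a.toPerm v = v from ha).symm

/-- The self-similarity homomorphism `π_v` from the stabilizer of `v` to `Aut T_d`,
`g ↦ g|_v`. -/
def secHom (d : ℕ) (v : Vertex d) : (stabT d v) →* AutT d where
  toFun g := sec g.1 v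
  map_one' := by
    apply Subtype.ext
    apply Equiv.ext
    intro u
    show ((1 : AutT d).toPerm (v ++ u)).drop v.length = (1 : AutT d).toPerm u
    rw [toPerm_one]
    simp [List.drop_left]
  map_mul' := by
    intro a b
    apply Subtype.ext
    apply Equiv.ext
    intro u
    have hb : (b.1).toPerm v = v := b.2
    show ((a.1 * b.1).toPerm (v ++ u)).drop v.length
        = (sec a.1 v).toPerm ((sec b.1 v).toPerm u)
    rw [toPerm_mul, Equiv.Perm.mul_apply]
    congr 1
    congr 1
    have h := secFun_spec b.1 v u
    rw [hb] at h
    exact h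

/-- The image subgroup `H^v = π_v(H_v)` of the stabilizer of `v` in `H` under the
self-similarity map. -/
def secSG (d : ℕ) (H : Subgroup (AutT d)) (v : Vertex d) : Subgroup (AutT d) :=
  (H.subgroupOf (stabT d v)).map (secHom d v)

/-- A subgroup of `Aut T_d` is self-similar if `H^v ≤ H` for every vertex `v`. -/
def IsSelfSimilar (d : ℕ) (H : Subgroup (AutT d)) : Prop :=
  ∀ v : Vertex d, secSG d H v ≤ H

/-- A subgroup of `Aut T_d` is fractal if `H^v = H` for every vertex `v`. -/
def IsFractal (d : ℕ) (H : Subgroup (AutT d)) : Prop :=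
  ∀ v : Vertex d, secSG d H v = H

end TreeDyn
namespace TreeDyn

open AutT

variable {d : ℕ}

instance : TopologicalSpace (Vertex d) := ⊥
instance : DiscreteTopology (Vertex d) := ⟨rfl⟩

/-- The profinite topology on `Aut T_d`: the topology of pointwise convergence on vertices. -/
instance : TopologicalSpace (AutT d) :=
  TopologicalSpace.induced (fun g : AutT d => (g.toPerm : Vertex d → Vertex d)) inferInstance

theorem continuous_toFun : Continuous fun g : AutT d => (g.toPerm : Vertex d → Vertex d) :=
  continuous_induced_dom

theorem continuous_ev (x : Vertex d) : Continuous fun g : AutT d => g.toPerm x :=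
  (continuous_apply x).comp continuous_toFun

instance : IsTopologicalGroup (AutT d) where
  continuous_mul := by
    apply continuous_induced_rng.2
    show Continuous fun p : AutT d × AutT d => ((p.1 * p.2).toPerm : Vertex d → Vertex d)
    apply continuous_pi
    intro x
    rw [continuous_discrete_rng]
    intro z
    have heq : ((fun p : AutT d × AutT d => (p.1 * p.2).toPerm x)) ⁻¹' {z}
        = ⋃ y : Vertex d, ((fun p : AutT d × AutT d => p.2.toPerm x) ⁻¹' {y})
            ∩ ((fun p : AutT d × AutT d => p.1.toPerm y) ⁻¹' {z}) := by
      ext p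
      simp only [Set.mem_preimage, Set.mem_singleton_iff, Set.mem_iUnion, Set.mem_inter_iff]
      constructor
      · intro h
        exact ⟨p.2.toPerm x, rfl, by rw [toPerm_mul, Equiv.Perm.mul_apply] at h; exact h⟩
      · rintro ⟨y, h1, h2⟩
        rw [toPerm_mul, Equiv.Perm.mul_apply, h1, h2]
    rw [heq]
    apply isOpen_iUnion
    intro y
    exact ((isOpen_discrete _).preimage ((continuous_ev x).comp continuous_snd)).inter
      ((isOpen_discrete _).preimage ((continuous_ev y).comp continuous_fst))
  continuous_inv := by
    apply continuous_induced_rng.2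
    show Continuous fun g : AutT d => ((g⁻¹).toPerm : Vertex d → Vertex d)
    apply continuous_pi
    intro x
    rw [continuous_discrete_rng]
    intro z
    have heq : (fun g : AutT d => (g⁻¹).toPerm x) ⁻¹' {z}
        = (fun g : AutT d => g.toPerm z) ⁻¹' {x} := by
      ext g
      simp only [Set.mem_preimage, Set.mem_singleton_iff]
      rw [toPerm_inv]
      exact Equiv.Perm.inv_eq_iff_eq.trans eq_comm
    rw [heq]
    exact (isOpen_discrete _).preimage (continuous_ev z)

end TreeDyn
namespace TreeDyn

open AutT

/-- `J` is the self-similar closure of `H` in `G`: the smallest closed self-similar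
subgroup of `G` containing `H`. -/
def IsSelfSimilarClosure (d : ℕ) (G H J : Subgroup (AutT d)) : Prop :=
  H ≤ J ∧ J ≤ G ∧ IsClosed (J : Set (AutT d)) ∧ IsSelfSimilar d J ∧
    ∀ J' : Subgroup (AutT d), H ≤ J' → J' ≤ G → IsClosed (J' : Set (AutT d)) →
      IsSelfSimilar d J' → J ≤ J'

/-- The pointwise stabilizer in `Aut T_d` of the vertices at level `m`. -/
def levelStab (d : ℕ) (m : ℕ) : Subgroup (AutT d) where
  carrier := {g | ∀ v : Vertex d, v.length = m → g.toPerm v = v}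
  one_mem' := fun _ _ => rfl
  mul_mem' := by
    intro a b ha hb v hv
    show (a * b).toPerm v = v
    rw [toPerm_mul, Equiv.Perm.mul_apply, hb v hv, ha v hv]
  inv_mem' := by
    intro a ha v hv
    show (a⁻¹).toPerm v = v
    rw [toPerm_inv, Equiv.Perm.inv_eq_iff_eq]
    exact (ha v hv).symm

/-- A topological group is pronilpotent if its quotient by every open normal subgroup
is nilpotent. -/
def Pronilpotent (G : Type*) [Group G] [TopologicalSpace G] : Prop :=
  ∀ (N : Subgroup G) [N.Normal], IsOpen (N : Set G) → Group.IsNilpotent (G ⧸ N)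

/-- A topological group is pro-`p` if its quotient by every open normal subgroup
is a `p`-group. -/
def IsProP (p : ℕ) (G : Type*) [Group G] [TopologicalSpace G] : Prop :=
  ∀ (N : Subgroup G) [N.Normal], IsOpen (N : Set G) → IsPGroup p (G ⧸ N)

/-- A topological group is prosolvable if its quotient by every open normal subgroup
is solvable. -/
def Prosolvable (G : Type*) [Group G] [TopologicalSpace G] : Prop :=
  ∀ (N : Subgroup G) [N.Normal], IsOpen (N : Set G) → IsSolvable (G ⧸ N)

/-- The Frattini subgroup of a topological group: the intersection of its
maximal open (proper) subgroups. -/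
def frattiniOpen (G : Type*) [Group G] [TopologicalSpace G] : Subgroup G :=
  sInf {M : Subgroup G | IsOpen (M : Set G) ∧ M ≠ ⊤ ∧
    ∀ M' : Subgroup G, IsOpen (M' : Set G) → M < M' → M' = ⊤}

end TreeDyn
namespace TreeDyn

open AutT

variable {d : ℕ}

/-- The cyclic successor on `Fin d`. -/
def succFin (x : Fin d) : Fin d :=
  ⟨(x.1 + 1) % d, Nat.mod_lt _ (Nat.lt_of_le_of_lt (Nat.zero_le _) x.2)⟩

/-- The cyclic predecessor on `Fin d`. -/
def predFin (x : Fin d) : Fin d :=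
  ⟨(x.1 + (d - 1)) % d, Nat.mod_lt _ (Nat.lt_of_le_of_lt (Nat.zero_le _) x.2)⟩

theorem predFin_succFin (x : Fin d) : predFin (succFin x) = x := by
  have hd : 0 < d := Nat.lt_of_le_of_lt (Nat.zero_le _) x.2
  apply Fin.ext
  show ((x.1 + 1) % d + (d - 1)) % d = x.1
  rw [Nat.mod_add_mod, show x.1 + 1 + (d - 1) = x.1 + d by omega, Nat.add_mod_right,
    Nat.mod_eq_of_lt x.2]

theorem succFin_predFin (x : Fin d) : succFin (predFin x) = x := by
  have hd : 0 < d := Nat.lt_of_le_of_lt (Nat.zero_le _) x.2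
  apply Fin.ext
  show ((x.1 + (d - 1)) % d + 1) % d = x.1
  rw [Nat.mod_add_mod, show x.1 + (d - 1) + 1 = x.1 + d by omega, Nat.add_mod_right,
    Nat.mod_eq_of_lt x.2]

theorem succFin_val_eq_zero_iff (x : Fin d) : (succFin x).1 = 0 ↔ x.1 + 1 = d := by
  show (x.1 + 1) % d = 0 ↔ x.1 + 1 = d
  by_cases h : x.1 + 1 = d
  · simp [h, Nat.mod_self]
  · rw [Nat.mod_eq_of_lt (by omega)]
    omega

theorem predFin_val_succ_eq_iff (x : Fin d) : (predFin x).1 + 1 = d ↔ x.1 = 0 := by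
  have hd : 0 < d := Nat.lt_of_le_of_lt (Nat.zero_le _) x.2
  show (x.1 + (d - 1)) % d + 1 = d ↔ x.1 = 0
  rcases Nat.eq_zero_or_pos x.1 with h | h
  · rw [h]
    simp only [Nat.zero_add]
    rw [Nat.mod_eq_of_lt (show d - 1 < d by omega)]
    simp only [iff_true, eq_self_iff_true]
    omega
  · rw [show x.1 + (d - 1) = (x.1 - 1) + d by omega, Nat.add_mod_right,
      Nat.mod_eq_of_lt (show x.1 - 1 < d by omega)]
    omega

/-- The odometer function: adds one with carrying, on words read root-first. -/
def odF (d : ℕ) : Vertex d → Vertex d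
  | [] => []
  | x :: u => succFin x :: (if x.1 + 1 = d then odF d u else u)

/-- The inverse odometer function. -/
def odG (d : ℕ) : Vertex d → Vertex d
  | [] => []
  | x :: u => predFin x :: (if x.1 = 0 then odG d u else u)

theorem odG_odF (u : Vertex d) : odG d (odF d u) = u := by
  induction u with
  | nil => rfl
  | cons x t ih =>
    simp only [odF, odG, predFin_succFin]
    by_cases h : x.1 + 1 = d
    · rw [if_pos h, if_pos ((succFin_val_eq_zero_iff x).mpr h), ih]
    · rw [if_neg h, if_neg (fun hc => h ((succFin_val_eq_zero_iff x).mp hc))]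

theorem odF_odG (u : Vertex d) : odF d (odG d u) = u := by
  induction u with
  | nil => rfl
  | cons x t ih =>
    simp only [odF, odG, succFin_predFin]
    by_cases h : x.1 = 0
    · rw [if_pos h, if_pos ((predFin_val_succ_eq_iff x).mpr h), ih]
    · rw [if_neg h, if_neg (fun hc => h ((predFin_val_succ_eq_iff x).mp hc))]

theorem odF_append (a b : Vertex d) :
    odF d (a ++ b) = odF d a ++ (if ∀ x ∈ a, x.1 + 1 = d then odF d b else b) := by
  induction a with
  | nil => simp [odF]
  | cons x t ih =>
    by_cases h : x.1 + 1 = d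
    · by_cases h2 : ∀ y ∈ t, y.1 + 1 = d
      · have hall : ∀ y ∈ x :: t, y.1 + 1 = d := by
          intro y hy
          rcases List.mem_cons.mp hy with rfl | hy
          · exact h
          · exact h2 y hy
        simp only [List.cons_append, List.append_eq, odF, if_pos h, if_pos h2, if_pos hall, ih]
      · have hall : ¬ ∀ y ∈ x :: t, y.1 + 1 = d :=
          fun hc => h2 fun y hy => hc y (List.mem_cons_of_mem x hy)
        simp only [List.cons_append, List.append_eq, odF, if_pos h, if_neg h2, if_neg hall, ih]
    · have hall : ¬ ∀ y ∈ x :: t, y.1 + 1 = d :=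
        fun hc => h (hc x (List.mem_cons_self))
      simp only [List.cons_append, List.append_eq, odF, if_neg h, if_neg hall]

theorem odG_append (a b : Vertex d) :
    odG d (a ++ b) = odG d a ++ (if ∀ x ∈ a, x.1 = 0 then odG d b else b) := by
  induction a with
  | nil => simp [odG]
  | cons x t ih =>
    by_cases h : x.1 = 0
    · by_cases h2 : ∀ y ∈ t, y.1 = 0
      · have hall : ∀ y ∈ x :: t, y.1 = 0 := by
          intro y hy
          rcases List.mem_cons.mp hy with rfl | hy
          · exact h
          · exact h2 y hy
        simp only [List.cons_append, List.append_eq, odG, if_pos h, if_pos h2, if_pos hall, ih]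
      · have hall : ¬ ∀ y ∈ x :: t, y.1 = 0 :=
          fun hc => h2 fun y hy => hc y (List.mem_cons_of_mem x hy)
        simp only [List.cons_append, List.append_eq, odG, if_pos h, if_neg h2, if_neg hall, ih]
    · have hall : ¬ ∀ y ∈ x :: t, y.1 = 0 :=
        fun hc => h (hc x (List.mem_cons_self))
      simp only [List.cons_append, List.append_eq, odG, if_neg h, if_neg hall]

theorem LP_odF : LP d (odF d) := by
  constructor
  · intro w
    induction w with
    | nil => rfl
    | cons x t ih =>
      simp only [odF]
      by_cases h : x.1 + 1 = d <;> simp [h, ih]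
  · intro v w h
    obtain ⟨t, rfl⟩ := h
    rw [odF_append]
    exact ⟨_, rfl⟩

theorem LP_odG : LP d (odG d) := by
  constructor
  · intro w
    induction w with
    | nil => rfl
    | cons x t ih =>
      simp only [odG]
      by_cases h : x.1 = 0 <;> simp [h, ih]
  · intro v w h
    obtain ⟨t, rfl⟩ := h
    rw [odG_append]
    exact ⟨_, rfl⟩

/-- The standard odometer as a permutation of the vertices. -/
def odPerm (d : ℕ) : Equiv.Perm (Vertex d) where
  toFun := odF d
  invFun := odG d
  left_inv := odG_odF
  right_inv := odF_odG

/-- The standard odometer `ω ∈ Aut T_d` (adds one to a `d`-adic digit string,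
with carrying). -/
def od (d : ℕ) : AutT d :=
  ⟨odPerm d, ⟨LP_odF, LP_odG⟩⟩

/-- The standard `d`-cycle `σ = (0 1 … d-1)` on the first level. -/
def sigmaFin (d : ℕ) : Equiv.Perm (Fin d) where
  toFun := succFin
  invFun := predFin
  left_inv := predFin_succFin
  right_inv := succFin_predFin

end TreeDyn

namespace TreeDyn

open AutT

section Aux

variable {d : ℕ}

theorem sec_toPerm (g : AutT d) (v u : Vertex d) :
    (sec g v).toPerm u = (g.toPerm (v ++ u)).drop v.length := rfl

theorem toPerm_append (g : AutT d) (v u : Vertex d) :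
    g.toPerm (v ++ u) = g.toPerm v ++ (sec g v).toPerm u := secFun_spec g v u

theorem sec_mul (a b : AutT d) (v : Vertex d) :
    sec (a * b) v = sec a (b.toPerm v) * sec b v := by
  apply Subtype.ext; apply Equiv.ext; intro u
  show ((a * b).toPerm (v ++ u)).drop v.length
      = (sec a (b.toPerm v)).toPerm ((sec b v).toPerm u)
  rw [sec_toPerm a, toPerm_mul, Equiv.Perm.mul_apply, toPerm_append b v u,
    length_apply b v]

theorem sec_one (v : Vertex d) : sec (1 : AutT d) v = 1 := by
  apply Subtype.ext; apply Equiv.ext; intro u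
  show ((1 : AutT d).toPerm (v ++ u)).drop v.length = (1 : AutT d).toPerm u
  rw [toPerm_one]
  show (v ++ u).drop v.length = u
  exact List.drop_left

theorem sec_inv (g : AutT d) {v : Vertex d} (h : g.toPerm v = v) :
    sec g⁻¹ v = (sec g v)⁻¹ := by
  have h1 := sec_mul g⁻¹ g v
  rw [inv_mul_cancel, sec_one, h] at h1
  exact eq_inv_of_mul_eq_one_left h1.symm

theorem sec_pow (g : AutT d) {v : Vertex d} (h : g.toPerm v = v) (n : ℕ) :
    sec (g ^ n) v = (sec g v) ^ n := by
  induction n with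
  | zero => rw [pow_zero, pow_zero, sec_one]
  | succ n ih => rw [pow_succ, pow_succ, sec_mul, h, ih]

theorem mem_secSG {K : Subgroup (AutT d)} {v : Vertex d} {x : AutT d} :
    x ∈ secSG d K v ↔ ∃ g : AutT d, g ∈ K ∧ g.toPerm v = v ∧ sec g v = x := by
  rw [secSG, Subgroup.mem_map]
  constructor
  · rintro ⟨y, hy, rfl⟩
    exact ⟨y.1, Subgroup.mem_subgroupOf.mp hy, y.2, rfl⟩
  · rintro ⟨g, hgK, hgv, rfl⟩
    exact ⟨⟨g, hgv⟩, Subgroup.mem_subgroupOf.mpr hgK, rfl⟩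

theorem secSG_mono {K K' : Subgroup (AutT d)} (h : K ≤ K') (v : Vertex d) :
    secSG d K v ≤ secSG d K' v := by
  intro x hx
  obtain ⟨g, hg, hgv, rfl⟩ := mem_secSG.mp hx
  exact mem_secSG.mpr ⟨g, h hg, hgv, rfl⟩

theorem levelStab_normal (d m : ℕ) : (levelStab d m).Normal := by
  constructor
  intro n hn g v hv
  have h1 : ((g⁻¹ : AutT d).toPerm v).length = m := by rw [length_apply]; exact hv
  show (g * n * g⁻¹).toPerm v = v
  rw [toPerm_mul, toPerm_mul]
  simp only [Equiv.Perm.mul_apply]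
  rw [hn _ h1, toPerm_inv, Equiv.Perm.inv_def, Equiv.apply_symm_apply]

theorem isOpen_levelStab (d m : ℕ) : IsOpen ((levelStab d m : Set (AutT d))) := by
  have heq : (levelStab d m : Set (AutT d))
      = ⋂ v ∈ {v : Vertex d | v.length = m}, {g : AutT d | g.toPerm v = v} := by
    ext g
    simp only [Set.mem_iInter, Set.mem_setOf_eq, SetLike.mem_coe]
    exact Iff.rfl
  rw [heq]
  refine Set.Finite.isOpen_biInter (List.finite_length_eq (Fin d) m) ?_
  intro v _
  show IsOpen ((fun g : AutT d => g.toPerm v) ⁻¹' {v})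
  exact (isOpen_discrete _).preimage (continuous_ev v)

theorem levelStab_fix_le (hd : 1 ≤ d) {m : ℕ} {g : AutT d} (hg : g ∈ levelStab d m)
    {v : Vertex d} (hv : v.length ≤ m) : g.toPerm v = v := by
  set w := v ++ List.replicate (m - v.length) (⟨0, hd⟩ : Fin d) with hw
  have hwl : w.length = m := by
    rw [hw, List.length_append, List.length_replicate]
    omega
  have h1 : g.toPerm v <+: g.toPerm w := g.prefix_apply ⟨_, rfl⟩
  rw [hg w hwl] at h1
  have h2 : g.toPerm v = w.take (g.toPerm v).length := List.prefix_iff_eq_take.mp h1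
  rw [length_apply] at h2
  rw [h2, hw, List.take_left]

theorem exists_levelStab_subset (hd : 1 ≤ d) {U : Set (AutT d)} (hU : IsOpen U)
    (h1 : (1 : AutT d) ∈ U) : ∃ m, (levelStab d m : Set (AutT d)) ⊆ U := by
  obtain ⟨W, hW, rfl⟩ := isOpen_induced_iff.mp hU
  have h1W : ⇑(1 : AutT d).toPerm ∈ W := h1
  obtain ⟨I, u, hIu, hsub⟩ := isOpen_pi_iff.mp hW _ h1W
  refine ⟨I.sup (fun v => v.length), fun g hg => ?_⟩
  apply hsub
  intro v hv
  have hvI : v ∈ I := hv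
  have hfix : g.toPerm v = v := levelStab_fix_le hd hg (Finset.le_sup hvI)
  have h2 := (hIu v hvI).2
  rw [toPerm_one] at h2
  show g.toPerm v ∈ u v
  rw [hfix]
  simpa using h2

/-- `K` is topologically `p`-torsion: powers of elements fall into every level stabilizer. -/
def TP (p : ℕ) {d : ℕ} (K : Subgroup (AutT d)) : Prop :=
  ∀ x ∈ K, ∀ m : ℕ, ∃ k : ℕ, x ^ p ^ k ∈ levelStab d m

theorem TP_of_isProP {p : ℕ} {K : Subgroup (AutT d)} (h : IsProP p K) : TP p K := by
  intro x hx m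
  haveI hN : ((levelStab d m).subgroupOf K).Normal := by
    constructor
    intro n hn g
    rw [Subgroup.mem_subgroupOf] at hn ⊢
    have := (levelStab_normal d m).conj_mem _ hn (g : AutT d)
    simpa using this
  have hopen : IsOpen (((levelStab d m).subgroupOf K : Set K)) := by
    have : ((levelStab d m).subgroupOf K : Set K)
        = (Subtype.val : K → AutT d) ⁻¹' (levelStab d m : Set (AutT d)) := rfl
    rw [this]
    exact (isOpen_levelStab d m).preimage continuous_subtype_val
  obtain ⟨k, hk⟩ := h ((levelStab d m).subgroupOf K) hopen
    (QuotientGroup.mk' ((levelStab d m).subgroupOf K) ⟨x, hx⟩)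
  rw [← map_pow] at hk
  have h2 : ((⟨x, hx⟩ : K) ^ p ^ k) ∈ (levelStab d m).subgroupOf K :=
    (QuotientGroup.eq_one_iff _).mp hk
  rw [Subgroup.mem_subgroupOf] at h2
  refine ⟨k, ?_⟩
  simpa using h2

theorem isProP_of_TP (hd : 1 ≤ d) {p : ℕ} {K : Subgroup (AutT d)} (h : TP p K) :
    IsProP p K := by
  intro N hNn hNopen
  intro q
  obtain ⟨y, rfl⟩ := QuotientGroup.mk_surjective q
  obtain ⟨U, hU, hUN⟩ := isOpen_induced_iff.mp hNopen
  have h1U : (1 : AutT d) ∈ U := by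
    have : (1 : K) ∈ (Subtype.val : K → AutT d) ⁻¹' U := by rw [hUN]; exact one_mem N
    exact this
  obtain ⟨m, hm⟩ := exists_levelStab_subset hd hU h1U
  obtain ⟨k, hk⟩ := h y.1 y.2 m
  refine ⟨k, ?_⟩
  have hyN : y ^ p ^ k ∈ N := by
    have : (y ^ p ^ k : K) ∈ (Subtype.val : K → AutT d) ⁻¹' U := by
      have : ((y ^ p ^ k : K) : AutT d) = y.1 ^ p ^ k := by simp
      show ((y ^ p ^ k : K) : AutT d) ∈ U
      rw [this]
      exact hm hk
    rw [hUN] at this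
    exact this
  show ((QuotientGroup.mk' N) y : K ⧸ N) ^ p ^ k = 1
  rw [← map_pow]
  exact (QuotientGroup.eq_one_iff _).mpr hyN

theorem TP_secSG {p : ℕ} {K : Subgroup (AutT d)} (h : TP p K) (v : Vertex d) :
    TP p (secSG d K v) := by
  intro x hx m
  obtain ⟨g, hgK, hgv, rfl⟩ := mem_secSG.mp hx
  obtain ⟨k, hk⟩ := h g hgK (v.length + m)
  refine ⟨k, ?_⟩
  rw [← sec_pow g hgv]
  show ∀ u : Vertex d, u.length = m → (sec (g ^ p ^ k) v).toPerm u = u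
  intro u hu
  show ((g ^ p ^ k).toPerm (v ++ u)).drop v.length = u
  rw [hk (v ++ u) (by rw [List.length_append, hu])]
  exact List.drop_left

theorem mul_mem_pow {A : Type*} [Group A] {N : Subgroup A} (hN : N.Normal)
    {y t : A} (ht : t ∈ N) : ∀ n : ℕ, ∃ t' ∈ N, (y * t) ^ n = y ^ n * t'
  | 0 => ⟨1, one_mem N, by simp⟩
  | (n + 1) => by
    obtain ⟨t', ht', hEq⟩ := mul_mem_pow hN ht n
    refine ⟨(y⁻¹ * t' * y) * t, mul_mem (by simpa using hN.conj_mem t' ht' y⁻¹) ht, ?_⟩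
    rw [pow_succ, hEq, pow_succ]
    group

theorem TP_topologicalClosure {p : ℕ} {L : Subgroup (AutT d)} (h : TP p L) :
    TP p L.topologicalClosure := by
  intro x hx m
  have hopen : IsOpen {z : AutT d | x⁻¹ * z ∈ levelStab d m} := by
    have heq : {z : AutT d | x⁻¹ * z ∈ levelStab d m}
        = (fun z : AutT d => x⁻¹ * z) ⁻¹' (levelStab d m : Set (AutT d)) := rfl
    rw [heq]
    exact (isOpen_levelStab d m).preimage (continuous_const.mul continuous_id)
  have hxmem : x ∈ closure (L : Set (AutT d)) := hx
  have hne : ({z : AutT d | x⁻¹ * z ∈ levelStab d m} ∩ (L : Set (AutT d))).Nonempty := by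
    refine mem_closure_iff.mp hxmem _ hopen ?_
    show x⁻¹ * x ∈ levelStab d m
    rw [inv_mul_cancel]
    exact one_mem _
  obtain ⟨y, hy1, hy2⟩ := hne
  have hs : x⁻¹ * y ∈ levelStab d m := hy1
  obtain ⟨k, hk⟩ := h y hy2 m
  obtain ⟨t', ht', hEq⟩ := mul_mem_pow (levelStab_normal d m) (inv_mem hs) (p ^ k)
  have hxeq : x = y * (x⁻¹ * y)⁻¹ := by group
  refine ⟨k, ?_⟩
  rw [hxeq, hEq]
  exact mul_mem hk ht'

/-- `K` is stable under conjugation by elements of `G`. -/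
def ConjStab {d : ℕ} (G K : Subgroup (AutT d)) : Prop :=
  ∀ g ∈ G, ∀ x ∈ K, g⁻¹ * x * g ∈ K

theorem ConjStab.conj_mem' {G K : Subgroup (AutT d)} (h : ConjStab G K)
    {g : AutT d} (hg : g ∈ G) {x : AutT d} (hx : x ∈ K) : g * x * g⁻¹ ∈ K := by
  have := h g⁻¹ (inv_mem hg) x hx
  rwa [inv_inv] at this

theorem conjStab_iSup {G : Subgroup (AutT d)} {ι : Sort*} (K : ι → Subgroup (AutT d))
    (h : ∀ i, ConjStab G (K i)) : ConjStab G (⨆ i, K i) := by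
  intro g hg x hx
  refine Subgroup.iSup_induction K (C := fun y => g⁻¹ * y * g ∈ ⨆ i, K i) hx ?_ ?_ ?_
  · intro i y hy
    exact le_iSup K i (h i g hg y hy)
  · have h1 : g⁻¹ * 1 * g = 1 := by group
    show g⁻¹ * 1 * g ∈ ⨆ i, K i
    rw [h1]; exact one_mem _
  · intro a b ha hb
    have h1 : g⁻¹ * (a * b) * g = (g⁻¹ * a * g) * (g⁻¹ * b * g) := by group
    show g⁻¹ * (a * b) * g ∈ ⨆ i, K i
    rw [h1]
    exact mul_mem ha hb

theorem conjStab_topologicalClosure {G L : Subgroup (AutT d)} (h : ConjStab G L) :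
    ConjStab G L.topologicalClosure := by
  intro g hg x hx
  have hc : Continuous fun z : AutT d => g⁻¹ * z * g :=
    (continuous_const.mul continuous_id).mul continuous_const
  have h1 : (fun z : AutT d => g⁻¹ * z * g) x
      ∈ closure ((fun z : AutT d => g⁻¹ * z * g) '' (L : Set (AutT d))) :=
    image_closure_subset_closure_image hc ⟨x, hx, rfl⟩
  have himg : (fun z : AutT d => g⁻¹ * z * g) '' (L : Set (AutT d)) ⊆ (L : Set (AutT d)) := by
    rintro _ ⟨y, hy, rfl⟩
    exact h g hg y hy
  show g⁻¹ * x * g ∈ closure (L : Set (AutT d))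
  exact closure_mono himg h1

theorem conjStab_secSG {G K : Subgroup (AutT d)} (hGfr : IsFractal d G)
    (hconj : ConjStab G K) (v : Vertex d) : ConjStab G (secSG d K v) := by
  intro g hg x hx
  obtain ⟨kk, hkK, hkv, rfl⟩ := mem_secSG.mp hx
  have hgmem : g ∈ secSG d G v := by rw [hGfr v]; exact hg
  obtain ⟨h, hhG, hhv, hhsec⟩ := mem_secSG.mp hgmem
  have hk' : h⁻¹ * kk * h ∈ K := hconj h hhG kk hkK
  have hhv' : (h⁻¹ : AutT d).toPerm v = v := by
    rw [toPerm_inv]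
    rw [Equiv.Perm.inv_eq_iff_eq]
    exact hhv.symm
  have hv' : (h⁻¹ * kk * h).toPerm v = v := by
    rw [toPerm_mul, toPerm_mul]
    simp only [Equiv.Perm.mul_apply]
    rw [hhv, hkv, hhv']
  refine mem_secSG.mpr ⟨h⁻¹ * kk * h, hk', hv', ?_⟩
  rw [sec_mul (h⁻¹ * kk) h v, hhv, sec_mul h⁻¹ kk v, hkv, sec_inv h hhv, hhsec]

theorem TP_iSup {p : ℕ} {G : Subgroup (AutT d)} {ι : Type*} (K : ι → Subgroup (AutT d))
    (hle : ∀ i, K i ≤ G) (hconj : ∀ i, ConjStab G (K i)) (hTP : ∀ i, TP p (K i)) :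
    TP p (⨆ i, K i) := by
  classical
  intro x hx m
  haveI := levelStab_normal d m
  set N := levelStab d m with hN
  set φ := QuotientGroup.mk' N with hφ
  have himg : ∀ i, IsPGroup p (Subgroup.map φ (K i)) := by
    intro i g
    obtain ⟨y, hy, hyg⟩ := Subgroup.mem_map.mp g.2
    obtain ⟨k, hk⟩ := hTP i y hy m
    refine ⟨k, Subtype.ext ?_⟩
    show ((g : AutT d ⧸ N)) ^ p ^ k = 1
    rw [← hyg, ← map_pow]
    exact (QuotientGroup.eq_one_iff _).mpr hk
  have hG : ∀ i, Subgroup.map φ G ≤ Subgroup.normalizer (Subgroup.map φ (K i) : Set (AutT d ⧸ N)) := by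
    intro i xx hxx
    obtain ⟨g, hg, rfl⟩ := Subgroup.mem_map.mp hxx
    rw [Subgroup.mem_normalizer_iff]
    intro h
    constructor
    · rintro ⟨y, hy, rfl⟩
      refine ⟨g * y * g⁻¹, (hconj i).conj_mem' hg hy, ?_⟩
      rw [map_mul, map_mul, map_inv]
    · rintro ⟨y, hy, hy2⟩
      have h3 : h = φ (g⁻¹ * y * g) := by
        rw [map_mul, map_mul, map_inv, hy2]
        group
      rw [h3]
      exact ⟨g⁻¹ * y * g, hconj i g hg y hy, rfl⟩
  have hFsup : ∀ F : Finset ι,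
      IsPGroup p (⨆ i ∈ F, Subgroup.map φ (K i) : Subgroup (AutT d ⧸ N)) := by
    intro F
    induction F using Finset.induction_on with
    | empty =>
        have hb : (⨆ i ∈ (∅ : Finset ι), Subgroup.map φ (K i) : Subgroup (AutT d ⧸ N)) = ⊥ := by
          simp
        rw [hb]
        exact IsPGroup.of_bot
    | insert a s ha ih =>
        rw [Finset.iSup_insert, sup_comm]
        refine IsPGroup.to_sup_of_normal_right' ih (himg _) ?_
        refine le_trans ?_ (hG _)
        exact iSup_le fun i => iSup_le fun _ => Subgroup.map_mono (hle i)
  have hx' : φ x ∈ ⨆ i, Subgroup.map φ (K i) := by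
    rw [← Subgroup.map_iSup]
    exact ⟨x, hx, rfl⟩
  have hfin : ∃ F : Finset ι, φ x ∈ ⨆ i ∈ F, Subgroup.map φ (K i) := by
    refine Subgroup.iSup_induction (C := fun y => ∃ F : Finset ι,
      y ∈ ⨆ i ∈ F, Subgroup.map φ (K i)) _ hx' ?_ ?_ ?_
    · intro i y hy
      refine ⟨{i}, ?_⟩
      have : Subgroup.map φ (K i) ≤ ⨆ j ∈ ({i} : Finset ι), Subgroup.map φ (K j) := by
        refine le_trans ?_ (le_iSup _ i)
        exact le_iSup (fun _ : i ∈ ({i} : Finset ι) => Subgroup.map φ (K i))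
          (Finset.mem_singleton_self i)
      exact this hy
    · exact ⟨∅, one_mem _⟩
    · rintro a b ⟨F1, h1⟩ ⟨F2, h2⟩
      have hle1 : (⨆ i ∈ F1, Subgroup.map φ (K i)) ≤ ⨆ i ∈ F1 ∪ F2, Subgroup.map φ (K i) :=
        biSup_mono (fun i hi => Finset.mem_union_left _ hi)
      have hle2 : (⨆ i ∈ F2, Subgroup.map φ (K i)) ≤ ⨆ i ∈ F1 ∪ F2, Subgroup.map φ (K i) :=
        biSup_mono (fun i hi => Finset.mem_union_right _ hi)
      exact ⟨F1 ∪ F2, mul_mem (hle1 h1) (hle2 h2)⟩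
  obtain ⟨F, hF⟩ := hfin
  obtain ⟨k, hk⟩ := hFsup F ⟨φ x, hF⟩
  have h2 : (φ x) ^ p ^ k = 1 := by
    have := Subtype.ext_iff.mp hk
    simpa using this
  rw [← map_pow] at h2
  exact ⟨k, (QuotientGroup.eq_one_iff _).mp h2⟩


end Aux


/-- **Open normal pro-`p` subgroups are self-similarity-closed.**
Let `d ≥ 2`, let `p` be a prime, and let `G` be a closed fractal subgroup of `Aut T_d`.
If `H` is an open normal subgroup of `G` that is pro-`p`, then the self-similar closure
of `H` in `G` is an open, normal, pro-`p` subgroup of `G`. -/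
theorem proP_selfSimilarClosure (d : ℕ) (hd : 2 ≤ d) (p : ℕ) (hp : p.Prime)
    (G : Subgroup (AutT d)) (hGclosed : IsClosed (G : Set (AutT d)))
    (hGfractal : IsFractal d G)
    (H : Subgroup (AutT d)) (hHG : H ≤ G)
    (hHopen : IsOpen ((H.subgroupOf G) : Set G))
    (hHnormal : (H.subgroupOf G).Normal)
    (hHp : IsProP p H) :
    ∀ J : Subgroup (AutT d), IsSelfSimilarClosure d G H J →
      IsOpen ((J.subgroupOf G) : Set G) ∧ (J.subgroupOf G).Normal ∧ IsProP p J := by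
  intro J hJ
  obtain ⟨hHJ, hJG, hJclosed, hJss, hJmin⟩ := hJ
  have hd1 : 1 ≤ d := le_trans (by norm_num) hd
  have hHconj : ConjStab G H := by
    intro g hg x hx
    have hx' : (⟨x, hHG hx⟩ : G) ∈ H.subgroupOf G := Subgroup.mem_subgroupOf.mpr hx
    have h2 := hHnormal.conj_mem _ hx' (⟨g, hg⟩ : G)⁻¹
    have h3 := Subgroup.mem_subgroupOf.mp h2
    simpa using h3
  set S : Set (Subgroup (AutT d)) := {K | K ≤ J ∧ ConjStab G K ∧ TP p K} with hS
  have hHS : H ∈ S := ⟨hHJ, hHconj, TP_of_isProP hHp⟩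
  set L : Subgroup (AutT d) := sSup S with hL
  have hLiSup : L = ⨆ K : S, (K : Subgroup (AutT d)) := sSup_eq_iSup' S
  set P : Subgroup (AutT d) := L.topologicalClosure with hP
  have hLJ : L ≤ J := sSup_le fun K hK => hK.1
  have hPJ : P ≤ J := Subgroup.topologicalClosure_minimal L hLJ hJclosed
  have hLconj : ConjStab G L := by
    have := conjStab_iSup (G := G) (fun K : S => (K : Subgroup (AutT d)))
      (fun K => K.2.2.1)
    rwa [← hLiSup] at this
  have hLTP : TP p L := by
    have := TP_iSup (G := G) (fun K : S => (K : Subgroup (AutT d)))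
      (fun K => K.2.1.trans hJG) (fun K => K.2.2.1) (fun K => K.2.2.2)
    rwa [← hLiSup] at this
  have hPconj : ConjStab G P := conjStab_topologicalClosure hLconj
  have hPTP : TP p P := TP_topologicalClosure hLTP
  have hPss : IsSelfSimilar d P := by
    intro v
    have hmem : secSG d P v ∈ S :=
      ⟨le_trans (secSG_mono hPJ v) (hJss v), conjStab_secSG hGfractal hPconj v,
        TP_secSG hPTP v⟩
    exact le_trans (le_sSup hmem) (Subgroup.le_topologicalClosure L)
  have hHP : H ≤ P := le_trans (le_sSup hHS) (Subgroup.le_topologicalClosure L)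
  have hPG : P ≤ G := hPJ.trans hJG
  have hJP : J ≤ P := hJmin P hHP hPG (Subgroup.isClosed_topologicalClosure L) hPss
  have hJeq : J = P := le_antisymm hJP hPJ
  refine ⟨?_, ?_, ?_⟩
  · exact Subgroup.isOpen_mono (Subgroup.comap_mono (f := G.subtype) hHJ) hHopen
  · constructor
    intro n hn g
    rw [Subgroup.mem_subgroupOf] at hn ⊢
    have h1 : (n : AutT d) ∈ P := by rw [← hJeq]; exact hn
    have h2 := hPconj.conj_mem' g.2 h1
    rw [hJeq]
    simpa using h2
  · refine isProP_of_TP hd1 ?_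
    intro x hx m
    exact hPTP x (hJeq ▸ hx) m

end TreeDyn
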